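/- Let A₁, A₂, A₃ be 2×2 complex matrices satisfying |det(A_i)| = 1 for i = 1, 2, 3, and let 𝒜_i denote the 8×8 block-diagonal matrix consisting of 4 copies of A_i on the diagonal. Then there exist complex matrices 𝒰₁, 𝒰₂, 𝒰₃ and 𝒱, each of dimensions 8 × 2 and each having orthonormal columns, such that for every i = 1, 2, 3 the 2×2 matrix 𝒰_i† 𝒜_i 𝒱 is upper triangular with both diagonal entries equal to 1. -/

import Mathlib

open Matrix

set_option maxHeartbeats 1600000

/-- The squared Frobenius norm of a `2 × 2` complex matrix. -/
noncomputable def sF (B : Matrix (Fin 2) (Fin 2) ℂ) : ℝ :=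
  Complex.normSq (B 0 0) + Complex.normSq (B 0 1) + Complex.normSq (B 1 0) + Complex.normSq (B 1 1)

lemma sF_ge (B : Matrix (Fin 2) (Fin 2) ℂ) (h : ‖B.det‖ = 1) : 2 ≤ sF B := by
  have hd : B.det = B 0 0 * B 1 1 - B 0 1 * B 1 0 := by
    simp [Matrix.det_fin_two]
  have h1 : ‖B.det‖ ≤ ‖B 0 0‖ * ‖B 1 1‖
      + ‖B 0 1‖ * ‖B 1 0‖ := by
    rw [hd]
    calc ‖B 0 0 * B 1 1 - B 0 1 * B 1 0‖
        ≤ ‖B 0 0 * B 1 1‖ + ‖B 0 1 * B 1 0‖ := by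
          exact norm_sub_le (B 0 0 * B 1 1) (B 0 1 * B 1 0)
      _ = _ := by simp [norm_mul]
  have e00 := Complex.sq_norm (B 0 0)
  have e01 := Complex.sq_norm (B 0 1)
  have e10 := Complex.sq_norm (B 1 0)
  have e11 := Complex.sq_norm (B 1 1)
  unfold sF
  nlinarith [sq_nonneg (‖B 0 0‖ - ‖B 1 1‖),
    sq_nonneg (‖B 0 1‖ - ‖B 1 0‖)]

/-- The `r`-th entry of a block of a `U`-column corresponding to column `k` of `B`. -/
noncomputable def ucol (B : Matrix (Fin 2) (Fin 2) ℂ) (r k : Fin 2) : ℂ :=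
  ((Real.sqrt 2 : ℝ) : ℂ) / (sF B : ℂ) * B r k
    + ((Real.sqrt (sF B - 2) : ℝ) : ℂ) / (sF B : ℂ) *
      (if r = 0 then -(starRingEnd ℂ) (B 1 k) else (starRingEnd ℂ) (B 0 k))

noncomputable def Umat (B : Matrix (Fin 2) (Fin 2) ℂ) : Matrix (Fin 2 × Fin 4) (Fin 2) ℂ :=
  fun p c =>
    if c = 0 then
      (if p.2 = 0 then ucol B p.1 0 else if p.2 = 1 then ucol B p.1 1 else 0)
    else
      (if p.2 = 2 then ucol B p.1 0 else if p.2 = 3 then ucol B p.1 1 else 0)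

noncomputable def Vmat : Matrix (Fin 2 × Fin 4) (Fin 2) ℂ :=
  fun p c =>
    if c = 0 then
      (if p.2 = 0 ∧ p.1 = 0 then (((Real.sqrt 2)⁻¹ : ℝ) : ℂ)
       else if p.2 = 1 ∧ p.1 = 1 then (((Real.sqrt 2)⁻¹ : ℝ) : ℂ) else 0)
    else
      (if p.2 = 2 ∧ p.1 = 0 then (((Real.sqrt 2)⁻¹ : ℝ) : ℂ)
       else if p.2 = 3 ∧ p.1 = 1 then (((Real.sqrt 2)⁻¹ : ℝ) : ℂ) else 0)

lemma sqrt_two_sq : ((Real.sqrt 2 : ℝ) : ℂ) * ((Real.sqrt 2 : ℝ) : ℂ) = 2 := by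
  norm_num [← Complex.ofReal_mul, Real.mul_self_sqrt]

lemma sF_eq_conj (B : Matrix (Fin 2) (Fin 2) ℂ) :
    (sF B : ℂ) = (starRingEnd ℂ) (B 0 0) * B 0 0 + (starRingEnd ℂ) (B 0 1) * B 0 1
      + (starRingEnd ℂ) (B 1 0) * B 1 0 + (starRingEnd ℂ) (B 1 1) * B 1 1 := by
  unfold sF
  push_cast
  rw [Complex.normSq_eq_conj_mul_self, Complex.normSq_eq_conj_mul_self,
    Complex.normSq_eq_conj_mul_self, Complex.normSq_eq_conj_mul_self]

lemma Vmat_orth : Vmatᴴ * Vmat = 1 := by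
  ext c d
  fin_cases c <;> fin_cases d <;>
    simp (config := { decide := true }) [Matrix.mul_apply, Fintype.sum_prod_type,
      Fin.sum_univ_two, Fin.sum_univ_four, Vmat, Matrix.one_apply] <;>
    rw [← mul_inv, sqrt_two_sq] <;> norm_num

lemma Umat_orth (B : Matrix (Fin 2) (Fin 2) ℂ) (h : 2 ≤ sF B) : (Umat B)ᴴ * Umat B = 1 := by
  have hS0 : (sF B : ℂ) ≠ 0 := by
    simp only [ne_eq, Complex.ofReal_eq_zero]; intro hc; rw [hc] at h; norm_num at h
  have hq : ((Real.sqrt (sF B - 2) : ℝ) : ℂ) * ((Real.sqrt (sF B - 2) : ℝ) : ℂ)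
      = (sF B : ℂ) - 2 := by
    rw [← Complex.ofReal_mul, Real.mul_self_sqrt (by linarith)]; push_cast; ring
  have hS := sF_eq_conj B
  ext c d
  fin_cases c <;> fin_cases d <;>
    simp (config := { decide := true }) [Matrix.mul_apply, Fintype.sum_prod_type,
      Fin.sum_univ_two, Fin.sum_univ_four, Umat, ucol, Matrix.one_apply] <;>
  · field_simp
    linear_combination ((starRingEnd ℂ) (B 0 0) * B 0 0 + (starRingEnd ℂ) (B 0 1) * B 0 1
      + (starRingEnd ℂ) (B 1 0) * B 1 0 + (starRingEnd ℂ) (B 1 1) * B 1 1) * sqrt_two_sq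
      + ((starRingEnd ℂ) (B 0 0) * B 0 0 + (starRingEnd ℂ) (B 0 1) * B 0 1
      + (starRingEnd ℂ) (B 1 0) * B 1 0 + (starRingEnd ℂ) (B 1 1) * B 1 1) * hq
      - (sF B : ℂ) * hS

lemma Umat_triangle (B : Matrix (Fin 2) (Fin 2) ℂ) (h : 2 ≤ sF B) :
    ((Umat B)ᴴ * Matrix.blockDiagonal (fun _ : Fin 4 => B) * Vmat) 1 0 = 0 ∧
    ((Umat B)ᴴ * Matrix.blockDiagonal (fun _ : Fin 4 => B) * Vmat) 0 0 = 1 ∧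
    ((Umat B)ᴴ * Matrix.blockDiagonal (fun _ : Fin 4 => B) * Vmat) 1 1 = 1 := by
  have hS0 : (sF B : ℂ) ≠ 0 := by
    simp only [ne_eq, Complex.ofReal_eq_zero]; intro hc; rw [hc] at h; norm_num at h
  have hr0 : ((Real.sqrt 2 : ℝ) : ℂ) ≠ 0 := by
    simp [Real.sqrt_eq_zero']
  have hS := sF_eq_conj B
  refine ⟨?_, ?_, ?_⟩ <;>
    simp (config := { decide := true }) [Matrix.mul_apply, Fintype.sum_prod_type,
      Fin.sum_univ_two, Fin.sum_univ_four, Umat, ucol, Vmat, Matrix.blockDiagonal_apply] <;>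
  · field_simp
    linear_combination (-((Real.sqrt 2 : ℝ) : ℂ)) * hS

/-- The explicit constructive case `n = 2`, `K = 3`, `N = 4` of the nearly-optimal `K`-GMD:
for `2 × 2` complex matrices `A₁, A₂, A₃` with `|det Aᵢ| = 1`, the `8 × 8` block-diagonal
extensions (4 copies of each `Aᵢ`) admit `8 × 2` matrices `𝒰₁, 𝒰₂, 𝒰₃, 𝒱` with
orthonormal columns such that each `2 × 2` matrix `𝒰ᵢᴴ 𝒜ᵢ 𝒱` is upper triangular with
both diagonal entries equal to `1`. -/
theorem space_time_triangularization_n2_K3_N4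
    (A : Fin 3 → Matrix (Fin 2) (Fin 2) ℂ)
    (hdet : ∀ i, ‖(A i).det‖ = 1) :
    ∃ (U : Fin 3 → Matrix (Fin 2 × Fin 4) (Fin 2) ℂ)
      (V : Matrix (Fin 2 × Fin 4) (Fin 2) ℂ),
      (∀ i, (U i)ᴴ * U i = 1) ∧ Vᴴ * V = 1 ∧
      (∀ i, ((U i)ᴴ * Matrix.blockDiagonal (fun _ : Fin 4 => A i) * V) 1 0 = 0) ∧
      (∀ i, ((U i)ᴴ * Matrix.blockDiagonal (fun _ : Fin 4 => A i) * V) 0 0 = 1) ∧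
      (∀ i, ((U i)ᴴ * Matrix.blockDiagonal (fun _ : Fin 4 => A i) * V) 1 1 = 1) := by
  have hs : ∀ i, 2 ≤ sF (A i) := fun i => sF_ge (A i) (hdet i)
  exact ⟨fun i => Umat (A i), Vmat,
    fun i => Umat_orth (A i) (hs i), Vmat_orth,
    fun i => (Umat_triangle (A i) (hs i)).1,
    fun i => (Umat_triangle (A i) (hs i)).2.1,
    fun i => (Umat_triangle (A i) (hs i)).2.2⟩
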